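/- For every integer b ≥ 2, the base-3 tetration satisfies T(b+1) ≡ T(b) (mod 10^(b-1)). -/
import Mathlib


def T : ℕ → ℕ
  | 0 => 1
  | b + 1 => 3 ^ T b

lemma euler_congr {a n x y : ℕ} (h : Nat.Coprime a n) (hxy : x ≡ y [MOD n.totient]) :
    a ^ x ≡ a ^ y [MOD n] := by
  wlog hle : x ≤ y generalizing x y
  · exact (this hxy.symm (by omega)).symm
  obtain ⟨c, hc⟩ := (Nat.modEq_iff_dvd' hle).mp hxy
  have hy : y = x + n.totient * c := by omega
  rw [hy, pow_add, pow_mul]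
  calc a ^ x = a ^ x * 1 ^ c := by ring
    _ ≡ a ^ x * (a ^ n.totient) ^ c [MOD n] :=
        (Nat.ModEq.refl _).mul ((Nat.ModEq.pow_totient h).symm.pow c)

lemma key : ∀ b : ℕ, 1 ≤ b →
    T (b + 1) ≡ T b [MOD 5 ^ (b - 1)] ∧ T (b + 1) ≡ T b [MOD 2 ^ (b + 1)] := by
  intro b hb
  induction b with
  | zero => omega
  | succ n ih =>
    rcases Nat.lt_or_ge n 1 with h1 | hn
    · interval_cases n
      constructor
      · exact Nat.modEq_one
      · decide
    · obtain ⟨h5, h2⟩ := ih hn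
      have h4 : T (n + 1) ≡ T n [MOD 4] := by
        refine Nat.ModEq.of_dvd ?_ h2
        have : (4:ℕ) = 2 ^ 2 := by norm_num
        rw [this]
        exact pow_dvd_pow 2 (by omega)
      have hcop45 : Nat.Coprime 4 (5 ^ (n - 1)) := Nat.Coprime.pow_right _ (by norm_num)
      have hcomb : T (n + 1) ≡ T n [MOD 4 * 5 ^ (n - 1)] :=
        (Nat.modEq_and_modEq_iff_modEq_mul hcop45).mp ⟨h4, h5⟩
      have htot5 : (5 ^ n).totient = 4 * 5 ^ (n - 1) := by
        rw [Nat.totient_prime_pow (by norm_num) (by omega)]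
        ring
      have htot2 : (2 ^ (n + 2)).totient = 2 ^ (n + 1) := by
        rw [Nat.totient_prime_pow (by norm_num) (by omega)]
        simp
      have hc5 : Nat.Coprime 3 (5 ^ n) := Nat.Coprime.pow_right _ (by norm_num)
      have hc2 : Nat.Coprime 3 (2 ^ (n + 2)) := Nat.Coprime.pow_right _ (by norm_num)
      constructor
      · show 3 ^ T (n + 1) ≡ 3 ^ T n [MOD 5 ^ (n + 1 - 1)]
        simp only [Nat.add_sub_cancel]
        exact euler_congr hc5 (by rw [htot5]; exact hcomb)
      · show 3 ^ T (n + 1) ≡ 3 ^ T n [MOD 2 ^ (n + 2)]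
        exact euler_congr hc2 (by rw [htot2]; exact h2)

theorem stmt3 : ∀ b : ℕ, 2 ≤ b → T (b + 1) ≡ T b [MOD 10 ^ (b - 1)] := by
  intro b hb
  obtain ⟨h5, h2⟩ := key b (by omega)
  have h2' : T (b + 1) ≡ T b [MOD 2 ^ (b - 1)] :=
    Nat.ModEq.of_dvd (pow_dvd_pow 2 (by omega)) h2
  have h10 : (10:ℕ) ^ (b - 1) = 2 ^ (b - 1) * 5 ^ (b - 1) := by
    rw [← Nat.mul_pow]
  rw [h10]
  exact (Nat.modEq_and_modEq_iff_modEq_mul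
    (Nat.Coprime.pow _ _ (by norm_num))).mp ⟨h2', h5⟩
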